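/- Fix ε with 0 ≤ ε ≤ 1/2 and set c = (1 − 2ε + 2√(ε(1−ε)))/√2. Then the largest eigenvalue of the Hermitian 4×4 matrix c·(X⊗I + I⊗X + Y⊗I + I⊗Y) + X⊗X + Y⊗Y equals 1 + √(5 + 16(1−2ε)√(ε(1−ε))). -/

import Mathlib

open Matrix Complex Kronecker

noncomputable section

def PauliX : Matrix (Fin 2) (Fin 2) ℂ := !![0, 1; 1, 0]
def PauliY : Matrix (Fin 2) (Fin 2) ℂ := !![0, -Complex.I; Complex.I, 0]
def PauliZ : Matrix (Fin 2) (Fin 2) ℂ := !![1, 0; 0, -1]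

/-- The 2×2 identity matrix. -/
def Id2 : Matrix (Fin 2) (Fin 2) ℂ := 1

/-- The largest eigenvalue of a (Hermitian) matrix, as the supremum of the
    Rayleigh quotient over unit vectors. -/
noncomputable def maxEig {m : Type*} [Fintype m] [DecidableEq m]
    (M : Matrix m m ℂ) : ℝ :=
  ⨆ v : {v : m → ℂ // ∑ i, Complex.normSq (v i) = 1},
    (star v.1 ⬝ᵥ (M *ᵥ v.1)).re

/-- a(θ) = ⟨X̃₁⟩ = 2√(ε(1−ε))·cos 2θ + (1−2ε)·sin 2θ. -/
def aCoef (ε θ : ℝ) : ℝ :=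
  2 * Real.sqrt (ε * (1 - ε)) * Real.cos (2 * θ) + (1 - 2 * ε) * Real.sin (2 * θ)

/-- b(θ) = ⟨Z̃₁⟩ = (1−2ε)·cos 2θ + 2√(ε(1−ε))·sin 2θ. -/
def bCoef (ε θ : ℝ) : ℝ :=
  (1 - 2 * ε) * Real.cos (2 * θ) + 2 * Real.sqrt (ε * (1 - ε)) * Real.sin (2 * θ)

lemma quad_aux (c L x0 x1 x2 x3 y0 y1 y2 y3 : ℝ)
    (hL2 : L^2 - 2*L = 8*c^2) (hL3 : 3 ≤ L)
    (hn : x0^2+y0^2+x1^2+y1^2+x2^2+y2^2+x3^2+y3^2 = 1) :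
    2*c*((x0*x1+y0*y1)+(x0*x2+y0*y2)+(x1*x3+y1*y3)+(x2*x3+y2*y3)
      + (x0*y1-y0*x1)+(x0*y2-y0*x2)+(x1*y3-y1*x3)+(x2*y3-y2*x3))
      + 4*(x1*x2+y1*y2) ≤ L := by
  have key : L^2 - L*(2*c*((x0*x1+y0*y1)+(x0*x2+y0*y2)+(x1*x3+y1*y3)+(x2*x3+y2*y3)
      + (x0*y1-y0*x1)+(x0*y2-y0*x2)+(x1*y3-y1*x3)+(x2*y3-y2*x3))
      + 4*(x1*x2+y1*y2))
      = (L*x0 - c*(x1+x2+y1+y2))^2 + (L*y0 - c*(y1+y2-x1-x2))^2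
      + (L*x3 - c*(x1+x2-y1-y2))^2 + (L*y3 - c*(x1+x2+y1+y2))^2
      + (L*(L+2)/2)*((x1-x2)^2+(y1-y2)^2) := by
    linear_combination (((x1+x2)^2+(y1+y2)^2)/2) * hL2 - L^2 * hn
  have hLpos : (0:ℝ) < L := by linarith
  have hS : (0:ℝ) ≤ (L*x0 - c*(x1+x2+y1+y2))^2 + (L*y0 - c*(y1+y2-x1-x2))^2
      + (L*x3 - c*(x1+x2-y1-y2))^2 + (L*y3 - c*(x1+x2+y1+y2))^2
      + (L*(L+2)/2)*((x1-x2)^2+(y1-y2)^2) := by positivity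
  have h1 : L * (2*c*((x0*x1+y0*y1)+(x0*x2+y0*y2)+(x1*x3+y1*y3)+(x2*x3+y2*y3)
      + (x0*y1-y0*x1)+(x0*y2-y0*x2)+(x1*y3-y1*x3)+(x2*y3-y2*x3))
      + 4*(x1*x2+y1*y2)) ≤ L * L := by nlinarith [key, hS]
  exact le_of_mul_le_mul_left h1 hLpos

lemma upperB_aux (c L : ℝ) (hL2 : L^2 - 2*L = 8*c^2) (hL3 : 3 ≤ L)
    (v : Fin 2 × Fin 2 → ℂ) (hv : ∑ i, Complex.normSq (v i) = 1) :
    (star v ⬝ᵥ ((((c:ℝ):ℂ) •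
          (PauliX ⊗ₖ Id2 + Id2 ⊗ₖ PauliX + PauliY ⊗ₖ Id2 + Id2 ⊗ₖ PauliY)
        + PauliX ⊗ₖ PauliX + PauliY ⊗ₖ PauliY) *ᵥ v)).re ≤ L := by
  simp only [Fintype.sum_prod_type, Fin.sum_univ_two, Complex.normSq_apply,
    Prod.mk_zero_zero, Prod.mk_one_one] at hv
  have h := quad_aux c L (v 0).re (v (0,1)).re (v (1,0)).re (v 1).re
      (v 0).im (v (0,1)).im (v (1,0)).im (v 1).im hL2 hL3 (by linarith [hv])
  simp [mulVec, dotProduct, Fintype.sum_prod_type, Fin.sum_univ_two,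
    PauliX, PauliY, Id2, Matrix.one_apply, kroneckerMap_apply,
    Matrix.smul_apply, Matrix.add_apply, Complex.add_re, Complex.mul_re,
    Complex.add_im, Complex.mul_im, Prod.mk_zero_zero, Prod.mk_one_one]
  nlinarith [h]

lemma witness_aux (c L n : ℝ) (hL2 : L^2 - 2*L = 8*c^2) (hL3 : 3 ≤ L)
    (hn2 : n^2 = 4*(L^2 - L)) (hn0 : 0 < n) :
    (∑ i, Complex.normSq ((fun p : Fin 2 × Fin 2 =>
        ((n⁻¹:ℝ):ℂ) * !![((2*c:ℝ):ℂ) - (2*c:ℝ)*Complex.I, (L:ℝ);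
                         (L:ℝ), ((2*c:ℝ):ℂ) + (2*c:ℝ)*Complex.I] p.1 p.2) i) = 1)
    ∧ (star (fun p : Fin 2 × Fin 2 =>
        ((n⁻¹:ℝ):ℂ) * !![((2*c:ℝ):ℂ) - (2*c:ℝ)*Complex.I, (L:ℝ);
                         (L:ℝ), ((2*c:ℝ):ℂ) + (2*c:ℝ)*Complex.I] p.1 p.2) ⬝ᵥ
      ((((c:ℝ):ℂ) •
          (PauliX ⊗ₖ Id2 + Id2 ⊗ₖ PauliX + PauliY ⊗ₖ Id2 + Id2 ⊗ₖ PauliY)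
        + PauliX ⊗ₖ PauliX + PauliY ⊗ₖ PauliY) *ᵥ (fun p : Fin 2 × Fin 2 =>
        ((n⁻¹:ℝ):ℂ) * !![((2*c:ℝ):ℂ) - (2*c:ℝ)*Complex.I, (L:ℝ);
                         (L:ℝ), ((2*c:ℝ):ℂ) + (2*c:ℝ)*Complex.I] p.1 p.2))).re = L := by
  have hne : n ≠ 0 := ne_of_gt hn0
  constructor
  · simp [Fintype.sum_prod_type, Fin.sum_univ_two, Complex.normSq_apply,
      Complex.add_re, Complex.mul_re, Complex.add_im, Complex.mul_im,
      Complex.sub_re, Complex.sub_im]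
    field_simp
    linear_combination (-2:ℝ) * hL2 - hn2
  · simp [mulVec, dotProduct, Fintype.sum_prod_type, Fin.sum_univ_two,
      PauliX, PauliY, Id2, Matrix.one_apply, kroneckerMap_apply,
      Matrix.smul_apply, Matrix.add_apply, Complex.add_re, Complex.mul_re,
      Complex.add_im, Complex.mul_im, Complex.sub_re, Complex.sub_im]
    field_simp
    linear_combination (-4:ℝ)*hL2 - hn2

/-- the biseparable bound of the three-qubit W-state witness with
    imprecision only in one party: the largest eigenvalue of
    c·(X⊗I + I⊗X + Y⊗I + I⊗Y) + X⊗X + Y⊗Y, with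
    c = (1 − 2ε + 2√(ε(1−ε)))/√2, equals 1 + √(5 + 16(1−2ε)√(ε(1−ε))). -/
theorem w_state_one_party_bound (ε : ℝ) (hε0 : 0 ≤ ε) (hε1 : ε ≤ 1 / 2) :
    maxEig
      ((((1 - 2 * ε + 2 * Real.sqrt (ε * (1 - ε))) / Real.sqrt 2 : ℝ) : ℂ) •
          (PauliX ⊗ₖ Id2 + Id2 ⊗ₖ PauliX + PauliY ⊗ₖ Id2 + Id2 ⊗ₖ PauliY)
        + PauliX ⊗ₖ PauliX + PauliY ⊗ₖ PauliY)
      = 1 + Real.sqrt (5 + 16 * (1 - 2 * ε) * Real.sqrt (ε * (1 - ε))) := by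
  set s := Real.sqrt (ε * (1 - ε)) with hsdef
  have hs0 : 0 ≤ s := Real.sqrt_nonneg _
  have hs2 : s^2 = ε * (1 - ε) := Real.sq_sqrt (by nlinarith)
  set c := (1 - 2 * ε + 2 * s) / Real.sqrt 2 with hcdef
  have h2 : (Real.sqrt 2)^2 = 2 := Real.sq_sqrt (by norm_num)
  have hcsq : c^2 = (1 - 2*ε + 2*s)^2 / 2 := by rw [hcdef, div_pow, h2]
  have hc2 : 8*c^2 = 4 + 16*(1-2*ε)*s := by
    rw [hcsq]; ring_nf; nlinarith [hs2]
  set t := Real.sqrt (5 + 16 * (1 - 2 * ε) * s) with htdef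
  have ht0 : 0 ≤ t := Real.sqrt_nonneg _
  have ht2 : t^2 = 5 + 16 * (1 - 2 * ε) * s := Real.sq_sqrt (by nlinarith)
  have ht2' : 2 ≤ t := by nlinarith
  set L := 1 + t with hLdef
  have hL2 : L^2 - 2*L = 8*c^2 := by rw [hLdef]; linear_combination ht2 - hc2
  have hL3 : 3 ≤ L := by rw [hLdef]; linarith
  set n := Real.sqrt (4*(L^2 - L)) with hndef
  have hn2 : n^2 = 4*(L^2 - L) := Real.sq_sqrt (by nlinarith)
  have hn0 : 0 < n := Real.sqrt_pos.mpr (by nlinarith)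
  obtain ⟨hnorm, hval⟩ := witness_aux c L n hL2 hL3 hn2 hn0
  rw [maxEig]
  haveI : Nonempty {v : Fin 2 × Fin 2 → ℂ // ∑ i, Complex.normSq (v i) = 1} :=
    ⟨⟨_, hnorm⟩⟩
  have hb : BddAbove (Set.range fun v : {v : Fin 2 × Fin 2 → ℂ //
      ∑ i, Complex.normSq (v i) = 1} =>
      (star v.1 ⬝ᵥ ((((c:ℝ):ℂ) •
          (PauliX ⊗ₖ Id2 + Id2 ⊗ₖ PauliX + PauliY ⊗ₖ Id2 + Id2 ⊗ₖ PauliY)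
        + PauliX ⊗ₖ PauliX + PauliY ⊗ₖ PauliY) *ᵥ v.1)).re) := by
    refine ⟨L, ?_⟩
    rintro y ⟨v, rfl⟩
    exact upperB_aux c L hL2 hL3 v.1 v.2
  apply le_antisymm
  · exact ciSup_le fun v => upperB_aux c L hL2 hL3 v.1 v.2
  · calc L = (star (fun p : Fin 2 × Fin 2 =>
        ((n⁻¹:ℝ):ℂ) * !![((2*c:ℝ):ℂ) - (2*c:ℝ)*Complex.I, (L:ℝ);
                         (L:ℝ), ((2*c:ℝ):ℂ) + (2*c:ℝ)*Complex.I] p.1 p.2) ⬝ᵥ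
      ((((c:ℝ):ℂ) •
          (PauliX ⊗ₖ Id2 + Id2 ⊗ₖ PauliX + PauliY ⊗ₖ Id2 + Id2 ⊗ₖ PauliY)
        + PauliX ⊗ₖ PauliX + PauliY ⊗ₖ PauliY) *ᵥ (fun p : Fin 2 × Fin 2 =>
        ((n⁻¹:ℝ):ℂ) * !![((2*c:ℝ):ℂ) - (2*c:ℝ)*Complex.I, (L:ℝ);
                         (L:ℝ), ((2*c:ℝ):ℂ) + (2*c:ℝ)*Complex.I] p.1 p.2))).re :=
          hval.symm
    _ ≤ _ := le_ciSup hb ⟨_, hnorm⟩
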